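/- In quadratic regression with standard normal covariate, for every α ∈ (0,1) the two-interval design ξ' with density φ(x)𝟙_{|x| ≥ a}, a = z_{1−α/2}, satisfies ψ(0, ξ') > ψ(a, ξ'), where ψ is the sensitivity function formed from the moments m₂(ξ'), m₄(ξ') as ψ(x) = α(m₄ − 3m₂x² + α(m₄/m₂)x² + αx⁴)/(αm₄ − m₂²). Equivalently, c(α) = αa²(2m₂/(αm₄ − m₂²) − a²α/(αm₄ − m₂²) − 1/m₂) > 0 for all α ∈ (0,1). -/

import Mathlib

open MeasureTheory Set Real Filter

set_option maxHeartbeats 1000000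

lemma aux_E_integrable (a : ℝ) :
    IntegrableOn (fun x : ℝ => Real.exp (-x ^ 2 / 2)) (Ioi a) := by
  have h : Integrable (fun x : ℝ => Real.exp (-(1/2 : ℝ) * x ^ 2)) :=
    integrable_exp_neg_mul_sq (by norm_num)
  have : (fun x : ℝ => Real.exp (-x ^ 2 / 2)) = fun x : ℝ => Real.exp (-(1/2 : ℝ) * x ^ 2) := by
    funext x; congr 1; ring
  rw [this]; exact h.integrableOn

lemma aux_xE_integrable (a : ℝ) :
    IntegrableOn (fun x : ℝ => x * Real.exp (-x ^ 2 / 2)) (Ioi a) := by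
  have h : Integrable (fun x : ℝ => x * Real.exp (-(1/2 : ℝ) * x ^ 2)) :=
    integrable_mul_exp_neg_mul_sq (by norm_num)
  have : (fun x : ℝ => x * Real.exp (-x ^ 2 / 2))
      = fun x : ℝ => x * Real.exp (-(1/2 : ℝ) * x ^ 2) := by
    funext x; congr 2; ring
  rw [this]; exact h.integrableOn

lemma aux_E_tendsto : Tendsto (fun x : ℝ => Real.exp (-x ^ 2 / 2)) atTop (nhds 0) := by
  have h1 : Tendsto (fun x : ℝ => -x ^ 2 / 2) atTop atBot := by
    apply Filter.Tendsto.atBot_div_const (by norm_num : (0:ℝ) < 2)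
    exact tendsto_neg_atTop_atBot.comp (tendsto_pow_atTop (by norm_num : 2 ≠ 0))
  exact Real.tendsto_exp_atBot.comp h1

lemma aux_hasDeriv_E (x : ℝ) :
    HasDerivAt (fun x : ℝ => Real.exp (-x ^ 2 / 2)) (-x * Real.exp (-x ^ 2 / 2)) x := by
  have h : HasDerivAt (fun x : ℝ => -x ^ 2 / 2) (-x) x := by
    have := ((hasDerivAt_pow 2 x).neg.div_const 2)
    refine this.congr_deriv ?_; push_cast; ring
  have := h.exp
  convert this using 1; ring

/-- FTC: ∫ x e^{-x²/2} over (a,∞) equals e^{-a²/2}. -/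
lemma aux_int_xE (a : ℝ) :
    ∫ x in Ioi a, x * Real.exp (-x ^ 2 / 2) = Real.exp (-a ^ 2 / 2) := by
  have hderiv : ∀ x ∈ Ici a, HasDerivAt (fun x : ℝ => -Real.exp (-x ^ 2 / 2))
      (x * Real.exp (-x ^ 2 / 2)) x := by
    intro x _
    have := (aux_hasDeriv_E x).neg
    refine this.congr_deriv ?_; ring
  have htend : Tendsto (fun x : ℝ => -Real.exp (-x ^ 2 / 2)) atTop (nhds 0) := by
    have := aux_E_tendsto.neg; simpa using this
  have := integral_Ioi_of_hasDerivAt_of_tendsto' hderiv (aux_xE_integrable a) htend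
  rw [this]; ring

theorem stmt12 (α : ℝ) (hα : α ∈ Set.Ioo (0 : ℝ) 1) (a : ℝ) (ha : 0 < a)
    (hquant : (∫ x in Set.Ici a, Real.sqrt (2 * Real.pi) ⁻¹ * Real.exp (-x ^ 2 / 2)) = α / 2)
    (m₂ m₄ : ℝ)
    (hm₂ : m₂ = α + Real.sqrt (2 / Real.pi) * a * Real.exp (-a ^ 2 / 2))
    (hm₄ : m₄ = 3 * m₂ + Real.sqrt (2 / Real.pi) * a ^ 3 * Real.exp (-a ^ 2 / 2)) :
    0 < α * a ^ 2 * (2 * m₂ / (α * m₄ - m₂ ^ 2) - a ^ 2 * α / (α * m₄ - m₂ ^ 2) - 1 / m₂) := by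
  obtain ⟨hα0, hα1⟩ := hα
  have hEpos : ∀ x : ℝ, 0 < Real.exp (-x ^ 2 / 2) := fun x => Real.exp_pos _
  have hs0 : (0:ℝ) < Real.sqrt (2 * Real.pi) := Real.sqrt_pos.2 (by positivity)
  have ht0 : (0:ℝ) < Real.sqrt (2 / Real.pi) := Real.sqrt_pos.2 (by positivity)
  have hts : Real.sqrt (2 / Real.pi) * Real.sqrt (2 * Real.pi) = 2 := by
    rw [← Real.sqrt_mul (by positivity)]
    have hpi := Real.pi_pos
    have h4 : 2 / Real.pi * (2 * Real.pi) = 4 := by field_simp; ring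
    rw [h4, show (4:ℝ) = 2^2 by norm_num, Real.sqrt_sq (by norm_num)]
  -- value of ∫ E over (a,∞)
  have hIoiEq : ∫ x in Ioi a, Real.exp (-x ^ 2 / 2) = α / 2 * Real.sqrt (2 * Real.pi) := by
    have h1 : (∫ x in Set.Ici a, Real.sqrt (2 * Real.pi) ⁻¹ * Real.exp (-x ^ 2 / 2))
        = ∫ x in Ioi a, Real.sqrt (2 * Real.pi) ⁻¹ * Real.exp (-x ^ 2 / 2) :=
      MeasureTheory.integral_Ici_eq_integral_Ioi
    rw [h1, MeasureTheory.integral_const_mul] at hquant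
    calc ∫ x in Ioi a, Real.exp (-x ^ 2 / 2)
        = Real.sqrt (2 * Real.pi)
            * (Real.sqrt (2 * Real.pi)⁻¹ * ∫ x in Ioi a, Real.exp (-x ^ 2 / 2)) := by
          rw [Real.sqrt_inv]; field_simp
      _ = Real.sqrt (2 * Real.pi) * (α / 2) := by rw [hquant]
      _ = α / 2 * Real.sqrt (2 * Real.pi) := mul_comm _ _
  -- upper bound : ∫ E ≤ E a / a
  have hU : ∫ x in Ioi a, Real.exp (-x ^ 2 / 2) ≤ Real.exp (-a ^ 2 / 2) / a := by
    have hstep : ∫ x in Ioi a, Real.exp (-x ^ 2 / 2)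
        ≤ ∫ x in Ioi a, a⁻¹ * (x * Real.exp (-x ^ 2 / 2)) := by
      apply setIntegral_mono_on (aux_E_integrable a)
        ((aux_xE_integrable a).const_mul a⁻¹) measurableSet_Ioi
      intro x hx
      have hax : a < x := hx
      have h1 : 1 ≤ a⁻¹ * x := by
        rw [← div_eq_inv_mul]; exact (one_le_div ha).2 hax.le
      nlinarith [hEpos x]
    calc ∫ x in Ioi a, Real.exp (-x ^ 2 / 2)
        ≤ ∫ x in Ioi a, a⁻¹ * (x * Real.exp (-x ^ 2 / 2)) := hstep
      _ = a⁻¹ * ∫ x in Ioi a, x * Real.exp (-x ^ 2 / 2) :=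
          MeasureTheory.integral_const_mul _ _
      _ = Real.exp (-a ^ 2 / 2) / a := by rw [aux_int_xE a]; ring
  -- lower bound : a/(a²+1) * E a ≤ ∫ E
  have hcontF : Continuous
      (fun x : ℝ => Real.exp (-x ^ 2 / 2) * (x ^ 4 + 2 * x ^ 2 - 1) / (x ^ 2 + 1) ^ 2) := by
    apply Continuous.div
    · fun_prop
    · fun_prop
    · intro x; positivity
  have hFle : ∀ x : ℝ,
      ‖Real.exp (-x ^ 2 / 2) * (x ^ 4 + 2 * x ^ 2 - 1) / (x ^ 2 + 1) ^ 2‖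
        ≤ Real.exp (-x ^ 2 / 2) := by
    intro x
    rw [Real.norm_eq_abs, abs_div, abs_of_pos (by positivity : (0:ℝ) < (x^2+1)^2),
      abs_mul, abs_of_pos (hEpos x), div_le_iff₀ (by positivity)]
    have h1 : |x ^ 4 + 2 * x ^ 2 - 1| ≤ (x ^ 2 + 1) ^ 2 := by
      rw [abs_le]; constructor <;> nlinarith [sq_nonneg x, sq_nonneg (x^2)]
    nlinarith [hEpos x, abs_nonneg (x ^ 4 + 2 * x ^ 2 - 1)]
  have hFint : IntegrableOn
      (fun x : ℝ => Real.exp (-x ^ 2 / 2) * (x ^ 4 + 2 * x ^ 2 - 1) / (x ^ 2 + 1) ^ 2)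
      (Ioi a) := by
    apply Integrable.mono' (aux_E_integrable a) (hcontF.aestronglyMeasurable.restrict)
    exact Filter.Eventually.of_forall fun x => hFle x
  have hgderiv : ∀ x : ℝ,
      HasDerivAt (fun x : ℝ => -(x / (x ^ 2 + 1) * Real.exp (-x ^ 2 / 2)))
      (Real.exp (-x ^ 2 / 2) * (x ^ 4 + 2 * x ^ 2 - 1) / (x ^ 2 + 1) ^ 2) x := by
    intro x
    have hne : (x ^ 2 + 1) ≠ 0 := by positivity
    have h1 : HasDerivAt (fun x : ℝ => x / (x ^ 2 + 1))
        ((1 * (x ^ 2 + 1) - x * (2 * x)) / (x ^ 2 + 1) ^ 2) x := by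
      have := (hasDerivAt_id x).div ((hasDerivAt_pow 2 x).add_const 1) hne
      refine this.congr_deriv ?_
      simp only [id_eq]
      push_cast
      ring
    have h3 := (h1.mul (aux_hasDeriv_E x)).neg
    refine h3.congr_deriv ?_
    field_simp
    ring
  have hgtend : Tendsto (fun x : ℝ => -(x / (x ^ 2 + 1) * Real.exp (-x ^ 2 / 2)))
      atTop (nhds 0) := by
    apply squeeze_zero_norm _ aux_E_tendsto
    intro x
    rw [norm_neg, Real.norm_eq_abs, abs_mul, abs_of_pos (hEpos x), abs_div,
      abs_of_pos (by positivity : (0:ℝ) < x ^ 2 + 1)]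
    have h1 : |x| / (x ^ 2 + 1) ≤ 1 := by
      rw [div_le_one (by positivity)]
      nlinarith [sq_abs x, sq_nonneg (|x| - 1)]
    nlinarith [hEpos x, abs_nonneg x,
      div_nonneg (abs_nonneg x) (by positivity : (0:ℝ) ≤ x^2+1)]
  have hLint : ∫ x in Ioi a,
      Real.exp (-x ^ 2 / 2) * (x ^ 4 + 2 * x ^ 2 - 1) / (x ^ 2 + 1) ^ 2
      = a / (a ^ 2 + 1) * Real.exp (-a ^ 2 / 2) := by
    have := integral_Ioi_of_hasDerivAt_of_tendsto' (fun x _ => hgderiv x) hFint hgtend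
    rw [this]; ring
  have hL : a / (a ^ 2 + 1) * Real.exp (-a ^ 2 / 2) ≤ ∫ x in Ioi a, Real.exp (-x ^ 2 / 2) := by
    rw [← hLint]
    apply setIntegral_mono_on hFint (aux_E_integrable a) measurableSet_Ioi
    intro x _
    rw [div_le_iff₀ (by positivity : (0:ℝ) < (x^2+1)^2)]
    nlinarith [hEpos x, sq_nonneg x, sq_nonneg (x^2)]
  -- translate to inequalities on b := √(2/π) a E a
  set t := Real.sqrt (2 / Real.pi) with htdef
  set s := Real.sqrt (2 * Real.pi) with hsdef
  set e := Real.exp (-a ^ 2 / 2) with hedef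
  have he0 : 0 < e := hEpos a
  have hU' : α * a ^ 2 ≤ t * a * e := by
    have h1 : α / 2 * s ≤ e / a := hIoiEq ▸ hU
    have h2 : α / 2 * s * a ≤ e := by
      rw [le_div_iff₀ ha] at h1; linarith
    have h3 := mul_le_mul_of_nonneg_left h2 (mul_pos ht0 ha).le
    have h4 : t * a * (α / 2 * s * a) = α * a ^ 2 := by
      linear_combination (α / 2 * a ^ 2) * hts
    linarith
  have hL' : t * a * e ≤ α * (a ^ 2 + 1) := by
    have h1 : a / (a ^ 2 + 1) * e ≤ α / 2 * s := hIoiEq ▸ hL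
    have h2 : a * e ≤ α / 2 * s * (a ^ 2 + 1) := by
      rw [div_mul_eq_mul_div, div_le_iff₀ (by positivity : (0:ℝ) < a ^ 2 + 1)] at h1
      linarith
    have h3 := mul_le_mul_of_nonneg_left h2 ht0.le
    have h4 : t * (α / 2 * s * (a ^ 2 + 1)) = α * (a ^ 2 + 1) := by
      linear_combination (α / 2 * (a ^ 2 + 1)) * hts
    nlinarith
  set b := t * a * e with hbdef
  have hb0 : 0 < b := by positivity
  have hm₂' : m₂ = α + b := hm₂
  have hm₄' : m₄ = 3 * m₂ + a ^ 2 * b := by rw [hm₄, hbdef]; ring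
  have hD : α * m₄ - m₂ ^ 2 = 2 * α ^ 2 + α * b + α * a ^ 2 * b - b ^ 2 := by
    rw [hm₄', hm₂']; ring
  have hDpos : 0 < α * m₄ - m₂ ^ 2 := by
    rw [hD]; nlinarith [hL', hb0, hα0]
  have hm₂pos : 0 < m₂ := by rw [hm₂']; positivity
  have hNpos : 0 < m₂ * (2 * m₂ - a ^ 2 * α) - (α * m₄ - m₂ ^ 2) := by
    rw [hD, hm₂']; nlinarith [hU', hb0, hα0]
  have key : 2 * m₂ / (α * m₄ - m₂ ^ 2) - a ^ 2 * α / (α * m₄ - m₂ ^ 2) - 1 / m₂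
      = (m₂ * (2 * m₂ - a ^ 2 * α) - (α * m₄ - m₂ ^ 2)) / ((α * m₄ - m₂ ^ 2) * m₂) := by
    field_simp
  rw [key]
  exact mul_pos (mul_pos hα0 (pow_pos ha 2)) (div_pos hNpos (mul_pos hDpos hm₂pos))
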